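/- Let K be a compact Hausdorff topological space and f ∈ C(K) with ‖f‖∞ = 1. If there exists a limit point (non-isolated point) x₀ of K with |f(x₀)| = 1, then f is a Daugavet point: for every g ∈ B_{C(K)}, every ε > 0, and every m ∈ ℕ there exist g₁, …, g_m ∈ B_{C(K)} with ‖f − g_i‖∞ ≥ 2 − ε for each i and ‖g − (1/m)Σ g_i‖∞ ≤ 2/m. Consequently B_{C(K)} = cl conv Δ_ε(f) for all ε > 0. -/

import Mathlib

open Set Metric

/-- If `f ∈ C(K)` (`K` compact Hausdorff) has norm one and `|f(x₀)| = 1` at a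
limit (non-isolated) point `x₀` of `K`, then `f` is a Daugavet point: for every
`g` in the unit ball, `ε > 0` and `m ∈ ℕ` there are `g₁, …, g_m` in the unit
ball with `‖f - gᵢ‖ ≥ 2 - ε` and `‖g - (1/m)∑ gᵢ‖ ≤ 2/m`; consequently
`B_{C(K)} = cl conv Δ_ε(f)` for all `ε > 0`. -/
theorem stmt_9 {K : Type*} [TopologicalSpace K] [CompactSpace K] [T2Space K]
    (f : C(K, ℝ)) (hf : ‖f‖ = 1)
    (x₀ : K) (hlim : (nhdsWithin x₀ {x₀}ᶜ).NeBot) (hfx : |f x₀| = 1) :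
    (∀ g : C(K, ℝ), ‖g‖ ≤ 1 → ∀ ε > (0 : ℝ), ∀ m : ℕ, 0 < m →
      ∃ G : Fin m → C(K, ℝ),
        (∀ i, ‖G i‖ ≤ 1 ∧ 2 - ε ≤ ‖f - G i‖) ∧
        ‖g - (m : ℝ)⁻¹ • ∑ i, G i‖ ≤ 2 / m) ∧
    (∀ ε > (0 : ℝ),
      Metric.closedBall (0 : C(K, ℝ)) 1 =
        closure (convexHull ℝ {h : C(K, ℝ) | ‖h‖ ≤ 1 ∧ 2 - ε ≤ ‖f - h‖})) := by
  haveI : (nhdsWithin x₀ {x₀}ᶜ).NeBot := hlim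
  set c : ℝ := f x₀ with hc
  have hmain : ∀ g : C(K, ℝ), ‖g‖ ≤ 1 → ∀ ε > (0 : ℝ), ∀ m : ℕ, 0 < m →
      ∃ G : Fin m → C(K, ℝ),
        (∀ i, ‖G i‖ ≤ 1 ∧ 2 - ε ≤ ‖f - G i‖) ∧
        ‖g - (m : ℝ)⁻¹ • ∑ i, G i‖ ≤ 2 / m := by
    intro g hg ε hε m hm
    -- the neighbourhood where f is close to f x₀
    set V : Set K := f ⁻¹' Metric.ball c ε with hV
    have hVopen : IsOpen V := (Metric.isOpen_ball).preimage f.continuous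
    have hx₀V : x₀ ∈ V := by simp [hV, hε, hc]
    have hVinf : V.Infinite :=
      infinite_of_mem_nhds x₀ (hVopen.mem_nhds hx₀V)
    -- m distinct points in V
    obtain ⟨e⟩ : Nonempty (ℕ ↪ V) := ⟨hVinf.natEmbedding⟩
    set x : Fin m → K := fun i => (e i : K) with hxdef
    have hxV : ∀ i, x i ∈ V := fun i => (e i).2
    have hxinj : Function.Injective x := by
      intro i j hij
      have : e i = e j := Subtype.ext hij
      exact Fin.val_injective (e.injective this)
    -- pairwise disjoint open neighbourhoods inside V
    obtain ⟨U, hU, hUdisj⟩ := (Set.finite_range x).t2_separation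
    set W : Fin m → Set K := fun i => U (x i) ∩ V with hW
    have hWopen : ∀ i, IsOpen (W i) := fun i => ((hU (x i)).2).inter hVopen
    have hxW : ∀ i, x i ∈ W i := fun i => ⟨(hU (x i)).1, hxV i⟩
    have hWdisj : ∀ i j, i ≠ j → Disjoint (W i) (W j) := by
      intro i j hij
      have h1 : Disjoint (U (x i)) (U (x j)) :=
        hUdisj (Set.mem_range_self i) (Set.mem_range_self j) (fun h => hij (hxinj h))
      exact Disjoint.mono (Set.inter_subset_left) (Set.inter_subset_left) h1
    -- Urysohn bumps
    have hη : ∀ i : Fin m, ∃ η : C(K, ℝ),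
        (∀ y, y ∉ W i → η y = 0) ∧ η (x i) = 1 ∧ ∀ y, η y ∈ Set.Icc (0:ℝ) 1 := by
      intro i
      obtain ⟨η, h0, h1, h01⟩ := exists_continuous_zero_one_of_isClosed
        (isClosed_compl_iff.2 (hWopen i)) (isClosed_singleton (x := x i))
        (by
          rw [Set.disjoint_singleton_right]
          exact fun h => h (hxW i))
      exact ⟨η, fun y hy => h0 hy, h1 rfl, h01⟩
    choose η hη0 hη1 hη01 using hη
    set G : Fin m → C(K, ℝ) := fun i => g - η i * (g + ContinuousMap.const K c) with hG
    have hgy : ∀ y : K, |g y| ≤ 1 := by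
      intro y
      have := g.norm_coe_le_norm y
      simpa [Real.norm_eq_abs] using this.trans hg
    have hGval : ∀ i y, G i y = g y - η i y * (g y + c) := by
      intro i y; simp [hG]
    refine ⟨G, fun i => ⟨?_, ?_⟩, ?_⟩
    · -- ‖G i‖ ≤ 1
      rw [ContinuousMap.norm_le _ zero_le_one]
      intro y
      rw [Real.norm_eq_abs, hGval]
      obtain ⟨h0, h1⟩ := hη01 i y
      have habs : |g y - η i y * (g y + c)| = |(1 - η i y) * g y + η i y * (-c)| := by
        ring_nf
      rw [habs]
      calc |(1 - η i y) * g y + η i y * (-c)|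
          ≤ |(1 - η i y) * g y| + |η i y * (-c)| := abs_add_le _ _
        _ = (1 - η i y) * |g y| + η i y * |c| := by
            rw [abs_mul, abs_mul, abs_of_nonneg (by linarith), abs_of_nonneg h0, abs_neg]
        _ ≤ (1 - η i y) * 1 + η i y * 1 := by
            have := hgy y
            have : |c| = 1 := hfx
            nlinarith [hgy y, abs_nonneg (g y)]
        _ = 1 := by ring
    · -- 2 - ε ≤ ‖f - G i‖
      have hval : (f - G i) (x i) = f (x i) + c := by
        simp [hGval, hη1 i]
      have hclose : |c - f (x i)| < ε := by
        have := hxV i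
        simp only [hV, Set.mem_preimage, Metric.mem_ball, Real.dist_eq] at this
        rw [abs_sub_comm]; exact this
      have h2 : 2 - ε ≤ |f (x i) + c| := by
        have h2c : |2 * c| = 2 := by rw [abs_mul]; simp [hfx]
        have : f (x i) + c = 2 * c - (c - f (x i)) := by ring
        rw [this]
        calc 2 - ε ≤ |2 * c| - |c - f (x i)| := by rw [h2c]; linarith
          _ ≤ |2 * c - (c - f (x i))| := abs_sub_abs_le_abs_sub _ _
      calc 2 - ε ≤ |(f - G i) (x i)| := by rw [hval]; exact h2
        _ ≤ ‖f - G i‖ := by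
            have := (f - G i).norm_coe_le_norm (x i)
            simpa [Real.norm_eq_abs] using this
    · -- average bound
      have hm' : (0:ℝ) < m := Nat.cast_pos.2 hm
      rw [ContinuousMap.norm_le _ (by positivity)]
      intro y
      have hsum : (∑ i, G i) y = m * g y - (∑ i, η i y) * (g y + c) := by
        rw [ContinuousMap.coe_sum, Finset.sum_apply]
        simp only [hGval]
        rw [Finset.sum_sub_distrib, Finset.sum_const, Finset.card_univ, Fintype.card_fin,
          nsmul_eq_mul, ← Finset.sum_mul]
      have hS0 : 0 ≤ ∑ i, η i y := Finset.sum_nonneg fun i _ => (hη01 i y).1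
      have hS1 : (∑ i, η i y) ≤ 1 := by
        by_cases hy : ∃ i, y ∈ W i
        · obtain ⟨i, hi⟩ := hy
          rw [Finset.sum_eq_single i (fun j _ hj => hη0 j y
            (fun hyj => (hWdisj j i hj).le_bot ⟨hyj, hi⟩)) (by simp)]
          exact (hη01 i y).2
        · push_neg at hy
          rw [Finset.sum_eq_zero fun i _ => hη0 i y (hy i)]
          exact zero_le_one
      have hgc : |g y + c| ≤ 2 := by
        calc |g y + c| ≤ |g y| + |c| := abs_add_le _ _
          _ ≤ 1 + 1 := by rw [hfx]; linarith [hgy y]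
          _ = 2 := by norm_num
      have hval : (g - (m:ℝ)⁻¹ • ∑ i, G i) y = (m:ℝ)⁻¹ * ((∑ i, η i y) * (g y + c)) := by
        simp only [ContinuousMap.sub_apply, ContinuousMap.smul_apply, smul_eq_mul, hsum]
        field_simp
        ring
      rw [Real.norm_eq_abs, hval, abs_mul, abs_mul,
        abs_of_nonneg (by positivity : (0:ℝ) ≤ (m:ℝ)⁻¹), abs_of_nonneg hS0]
      have : (∑ i, η i y) * |g y + c| ≤ 2 := by nlinarith [abs_nonneg (g y + c)]
      calc (m:ℝ)⁻¹ * ((∑ i, η i y) * |g y + c|) ≤ (m:ℝ)⁻¹ * 2 := by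
            apply mul_le_mul_of_nonneg_left this (by positivity)
        _ = 2 / m := by ring
  refine ⟨hmain, ?_⟩
  intro ε hε
  set S : Set C(K, ℝ) := {h : C(K, ℝ) | ‖h‖ ≤ 1 ∧ 2 - ε ≤ ‖f - h‖} with hS
  apply Set.Subset.antisymm
  · intro g hg
    rw [Metric.mem_closedBall, dist_zero_right] at hg
    rw [Metric.mem_closure_iff]
    intro δ hδ
    obtain ⟨m, hm⟩ := exists_nat_gt (2 / δ)
    have hm0 : 0 < m := by
      by_contra h
      push_neg at h
      interval_cases m
      simp at hm
      nlinarith [div_pos (by norm_num : (0:ℝ) < 2) hδ]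
    obtain ⟨G, hG1, hG2⟩ := hmain g hg ε hε m hm0
    refine ⟨(m:ℝ)⁻¹ • ∑ i, G i, ?_, ?_⟩
    · have : (m:ℝ)⁻¹ • ∑ i, G i = Finset.univ.centerMass (fun _ : Fin m => (1:ℝ)) G := by
        rw [Finset.centerMass]
        simp [Finset.sum_const, Finset.card_univ]
      rw [this]
      exact Finset.centerMass_mem_convexHull _ (fun i _ => zero_le_one)
        (by simp [Finset.sum_const, Finset.card_univ]; exact_mod_cast hm0)
        (fun i _ => hG1 i)
    · rw [dist_eq_norm]
      have hm' : (0:ℝ) < m := Nat.cast_pos.2 hm0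
      have : 2 / (m:ℝ) < δ := by
        rw [div_lt_iff₀ hm']
        rw [div_lt_iff₀ hδ] at hm
        nlinarith
      linarith [hG2]
  · apply closure_minimal
    · apply convexHull_min
      · intro h hh
        rw [Metric.mem_closedBall, dist_zero_right]
        exact hh.1
      · exact convex_closedBall _ _
    · exact Metric.isClosed_closedBall
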